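/- Let U be an N-dimensional unitary with N = 2ⁿ, and suppose at least a 2/3 fraction of x ∈ Z₄ⁿ satisfy D(Uσ_xU†, P_n) ≤ δ, where P_n is the n-qubit Pauli group. Then for every y ∈ Z₄ⁿ, D(Uσ_yU†, P_n) ≤ 2δ. -/

import Mathlib

open Matrix

/-- Frobenius (Hilbert–Schmidt) norm `‖A‖ = √tr(A†A)`. -/
noncomputable def fnorm {ι : Type*} [Fintype ι] (A : Matrix ι ι ℂ) : ℝ :=
  Real.sqrt (Matrix.trace (Aᴴ * A)).re

/-- Phase-optimized normalized Frobenius distance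
`D(A,B) = min_{θ∈[0,2π)} (1/√(2N)) ‖e^{iθ}A − B‖`. -/
noncomputable def uDist {ι : Type*} [Fintype ι] (A B : Matrix ι ι ℂ) : ℝ :=
  sInf ((fun θ : ℝ => (Real.sqrt (2 * Fintype.card ι))⁻¹ *
    fnorm (Complex.exp (θ * Complex.I) • A - B)) '' Set.Ico 0 (2 * Real.pi))

/-- The 2×2 Pauli matrices `I, X, Y, Z`. -/
def sigma : Fin 4 → Matrix (Fin 2) (Fin 2) ℂ
  | 0 => 1
  | 1 => !![0, 1; 1, 0]
  | 2 => !![0, -Complex.I; Complex.I, 0]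
  | 3 => !![1, 0; 0, -1]

/-- The `n`-qubit Pauli matrix `σ_x = σ_{x₁} ⊗ ⋯ ⊗ σ_{x_n}`. -/
def pauli {n : ℕ} (x : Fin n → Fin 4) :
    Matrix (Fin n → Fin 2) (Fin n → Fin 2) ℂ :=
  fun i j => ∏ k, sigma (x k) (i k) (j k)

/-- Pauli coefficient `μ_x(A) = tr(σ_x A)/2ⁿ`. -/
noncomputable def pcoef {n : ℕ} (x : Fin n → Fin 4)
    (A : Matrix (Fin n → Fin 2) (Fin n → Fin 2) ℂ) : ℂ :=
  Matrix.trace (pauli x * A) / 2 ^ n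

/-- Support of a Pauli index string. -/
def psupp {n : ℕ} (x : Fin n → Fin 4) : Finset (Fin n) :=
  Finset.univ.filter (fun i => x i ≠ 0)

/-- Distance from a matrix to a set of matrices. -/
noncomputable def uDistSet {ι : Type*} [Fintype ι]
    (A : Matrix ι ι ℂ) (S : Set (Matrix ι ι ℂ)) : ℝ :=
  sInf (uDist A '' S)

/-- The n-qubit Pauli group P_n = {i^k σ_x : k ∈ Z₄, x ∈ Z₄ⁿ}. -/
def PauliGroup (n : ℕ) : Set (Matrix (Fin n → Fin 2) (Fin n → Fin 2) ℂ) :=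
  {P | ∃ k : Fin 4, ∃ x : Fin n → Fin 4, P = Complex.I ^ (k : ℕ) • pauli x}

/-! ### Auxiliary material -/

/-- Klein four-group structure on Pauli labels. -/
def mul4 (a b : Fin 4) : Fin 4 := ![![0,1,2,3],![1,0,3,2],![2,3,0,1],![3,2,1,0]] a b

/-- Phase table: `σ_a σ_b = i^{ph4 a b} σ_{mul4 a b}`. -/
def ph4 (a b : Fin 4) : Fin 4 := ![![0,0,0,0],![0,0,1,3],![0,3,0,1],![0,1,3,0]] a b

lemma sigma_mul (a b : Fin 4) :
    sigma a * sigma b = Complex.I ^ ((ph4 a b : ℕ)) • sigma (mul4 a b) := by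
  fin_cases a <;> fin_cases b <;>
    · ext i j
      fin_cases i <;> fin_cases j <;>
        simp [sigma, mul4, ph4, Matrix.mul_apply, Fin.sum_univ_two, Matrix.one_apply,
          Complex.ext_iff] <;>
          norm_num [vecHead, vecTail, pow_succ, show ((3:Fin 4):ℕ) = 3 from rfl]

lemma sigma_herm (a : Fin 4) : (sigma a)ᴴ = sigma a := by
  fin_cases a <;>
    · ext i j
      fin_cases i <;> fin_cases j <;>
        simp [sigma, Matrix.conjTranspose_apply, Matrix.one_apply, Complex.ext_iff]

lemma pauli_mul {n : ℕ} (x y : Fin n → Fin 4) :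
    pauli x * pauli y =
      (∏ k, Complex.I ^ ((ph4 (x k) (y k) : ℕ))) • pauli (fun k => mul4 (x k) (y k)) := by
  ext i j
  have h1 : (pauli x * pauli y) i j = ∏ k, (sigma (x k) * sigma (y k)) (i k) (j k) := by
    simp only [Matrix.mul_apply, pauli]
    rw [show (fun m : Fin n → Fin 2 => (∏ k, sigma (x k) (i k) (m k)) *
        ∏ k, sigma (y k) (m k) (j k)) = fun m => ∏ k, (sigma (x k) (i k) (m k) *
        sigma (y k) (m k) (j k)) from funext fun m => (Finset.prod_mul_distrib).symm]
    rw [show (Finset.univ : Finset (Fin n → Fin 2)) = Fintype.piFinset (fun _ => Finset.univ) by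
      simp]
    exact (Finset.prod_univ_sum (fun _ => (Finset.univ : Finset (Fin 2)))
      (fun k t => sigma (x k) (i k) t * sigma (y k) t (j k))).symm
  rw [h1]
  simp only [sigma_mul, Matrix.smul_apply, smul_eq_mul, Finset.prod_mul_distrib]
  simp [pauli]

lemma pauli_zero {n : ℕ} : pauli (fun _ : Fin n => (0 : Fin 4)) = 1 := by
  ext i j
  simp only [pauli, sigma, Matrix.one_apply]
  by_cases h : i = j
  · subst h; simp
  · rw [if_neg h]
    obtain ⟨k, hk⟩ : ∃ k, i k ≠ j k := by
      by_contra hc; push_neg at hc; exact h (funext hc)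
    exact Finset.prod_eq_zero (Finset.mem_univ k) (by simp [Matrix.one_apply, hk])

lemma pauli_herm {n : ℕ} (x : Fin n → Fin 4) : (pauli x)ᴴ = pauli x := by
  ext i j
  simp only [Matrix.conjTranspose_apply, pauli, star_prod]
  exact Finset.prod_congr rfl fun k _ => by
    have := congrFun (congrFun (sigma_herm (x k)) (i k)) (j k)
    simpa [Matrix.conjTranspose_apply] using this

lemma mul4_self (a : Fin 4) : mul4 a a = 0 := by fin_cases a <;> rfl
lemma ph4_self (a : Fin 4) : ph4 a a = 0 := by fin_cases a <;> rfl
lemma mul4_mul4 (a b : Fin 4) : mul4 (mul4 a b) b = a := by fin_cases a <;> fin_cases b <;> rfl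
lemma mul4_cancel (a b : Fin 4) : mul4 a (mul4 a b) = b := by fin_cases a <;> fin_cases b <;> rfl

lemma pauli_mul_self {n : ℕ} (x : Fin n → Fin 4) : pauli x * pauli x = 1 := by
  rw [pauli_mul]
  simp [ph4_self, mul4_self, pauli_zero]

/-! ### Frobenius norm lemmas -/

section Frob

variable {ι : Type*} [Fintype ι]

attribute [local instance] Matrix.frobeniusSeminormedAddCommGroup

lemma fnorm_eq_norm (A : Matrix ι ι ℂ) : fnorm A = ‖A‖ := by
  rw [Matrix.frobenius_norm_def, fnorm, Real.sqrt_eq_rpow]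
  congr 1
  have hz : ∀ z : ℂ, (star z * z).re = ‖z‖ ^ 2 := fun z => by
    simp [Complex.star_def, Complex.mul_re, Complex.conj_re, Complex.conj_im,
      Complex.sq_norm, Complex.normSq_apply]
  simp only [Matrix.trace, Matrix.diag, Matrix.mul_apply, Matrix.conjTranspose_apply,
    Complex.re_sum]
  rw [Finset.sum_comm]
  simp only [hz]
  rw [show ((2:ℝ)) = ((2:ℕ):ℝ) by norm_num]
  simp only [Real.rpow_natCast]

lemma fnorm_nonneg (A : Matrix ι ι ℂ) : 0 ≤ fnorm A := Real.sqrt_nonneg _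

lemma fnorm_add_le (A B : Matrix ι ι ℂ) : fnorm (A + B) ≤ fnorm A + fnorm B := by
  simp only [fnorm_eq_norm]; exact norm_add_le A B

lemma fnorm_unit_smul (c : ℂ) (hc : star c * c = 1) (A : Matrix ι ι ℂ) :
    fnorm (c • A) = fnorm A := by
  unfold fnorm
  rw [Matrix.conjTranspose_smul, Matrix.smul_mul, Matrix.mul_smul, smul_smul, hc, one_smul]

variable [DecidableEq ι]

lemma fnorm_unitary_left {U : Matrix ι ι ℂ} (hU : Uᴴ * U = 1) (A : Matrix ι ι ℂ) :
    fnorm (U * A) = fnorm A := by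
  unfold fnorm
  rw [Matrix.conjTranspose_mul, Matrix.mul_assoc, ← Matrix.mul_assoc Uᴴ U A, hU, Matrix.one_mul]

lemma fnorm_unitary_right {V : Matrix ι ι ℂ} (hV : V * Vᴴ = 1) (A : Matrix ι ι ℂ) :
    fnorm (A * V) = fnorm A := by
  unfold fnorm
  rw [Matrix.conjTranspose_mul, show Vᴴ * Aᴴ * (A * V) = Vᴴ * (Aᴴ * A * V) by
    rw [Matrix.mul_assoc, Matrix.mul_assoc], Matrix.trace_mul_comm,
    Matrix.mul_assoc, hV, Matrix.mul_one]

end Frob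

/-! ### uDist lemmas -/

section UD

variable {κ : Type*} [Fintype κ] (A B : Matrix κ κ ℂ)

lemma uDist_img_nonneg : ∀ r ∈ ((fun θ : ℝ => (Real.sqrt (2 * Fintype.card κ))⁻¹ *
    fnorm (Complex.exp (θ * Complex.I) • A - B)) '' Set.Ico 0 (2 * Real.pi)), 0 ≤ r := by
  rintro r ⟨θ, -, rfl⟩
  exact mul_nonneg (inv_nonneg.2 (Real.sqrt_nonneg _)) (fnorm_nonneg _)

lemma uDist_img_bdd : BddBelow ((fun θ : ℝ => (Real.sqrt (2 * Fintype.card κ))⁻¹ *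
    fnorm (Complex.exp (θ * Complex.I) • A - B)) '' Set.Ico 0 (2 * Real.pi)) :=
  ⟨0, fun r hr => uDist_img_nonneg A B r hr⟩

lemma uDist_img_nonempty : ((fun θ : ℝ => (Real.sqrt (2 * Fintype.card κ))⁻¹ *
    fnorm (Complex.exp (θ * Complex.I) • A - B)) '' Set.Ico 0 (2 * Real.pi)).Nonempty :=
  ⟨_, Set.mem_image_of_mem _ (Set.mem_Ico.2 ⟨le_refl (0:ℝ), Real.two_pi_pos⟩)⟩

lemma uDist_nonneg : 0 ≤ uDist A B :=
  le_csInf (uDist_img_nonempty A B) (fun r hr => uDist_img_nonneg A B r hr)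

lemma exp_theta_eq (θ : ℝ) :
    Complex.exp ((toIcoMod Real.two_pi_pos 0 θ : ℝ) * Complex.I) =
      Complex.exp (θ * Complex.I) := by
  have h := self_sub_toIcoMod Real.two_pi_pos 0 θ
  set m := toIcoDiv Real.two_pi_pos 0 θ
  have : (toIcoMod Real.two_pi_pos 0 θ : ℝ) = θ - m • (2 * Real.pi) := by linarith [h]
  rw [this]
  push_cast
  rw [sub_mul, Complex.exp_sub, zsmul_eq_mul]
  rw [show (m : ℂ) * (2 * Real.pi) * Complex.I = (m : ℂ) * (2 * Real.pi * Complex.I) by ring,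
    Complex.exp_int_mul_two_pi_mul_I, div_one]

lemma uDist_le (θ : ℝ) :
    uDist A B ≤ (Real.sqrt (2 * Fintype.card κ))⁻¹ *
      fnorm (Complex.exp (θ * Complex.I) • A - B) := by
  have hmem : toIcoMod Real.two_pi_pos 0 θ ∈ Set.Ico (0:ℝ) (2 * Real.pi) := by
    simpa using toIcoMod_mem_Ico Real.two_pi_pos 0 θ
  have := csInf_le (uDist_img_bdd A B) (Set.mem_image_of_mem _ hmem)
  rwa [exp_theta_eq θ] at this

lemma uDistSet_le {S : Set (Matrix κ κ ℂ)} (hB : B ∈ S) : uDistSet A S ≤ uDist A B :=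
  csInf_le ⟨0, by rintro r ⟨C, -, rfl⟩; exact uDist_nonneg A C⟩ (Set.mem_image_of_mem _ hB)

lemma uDistSet_extract {S : Set (Matrix κ κ ℂ)} (hS : S.Nonempty) {δ ε : ℝ} (hε : 0 < ε)
    (h : uDistSet A S ≤ δ) :
    ∃ B ∈ S, ∃ θ : ℝ, (Real.sqrt (2 * Fintype.card κ))⁻¹ *
      fnorm (Complex.exp (θ * Complex.I) • A - B) < δ + ε := by
  have h1 : sInf (uDist A '' S) < δ + ε := lt_of_le_of_lt h (by linarith)
  obtain ⟨r, ⟨C, hC, rfl⟩, hr⟩ := exists_lt_of_csInf_lt (hS.image _) h1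
  obtain ⟨r', ⟨θ, hθ, rfl⟩, hr'⟩ := exists_lt_of_csInf_lt (uDist_img_nonempty A C) hr
  exact ⟨C, hC, θ, hr'⟩

end UD

/-! ### phases -/

lemma I_pow_mod (m : ℕ) : Complex.I ^ m = Complex.I ^ (m % 4) := by
  conv_lhs => rw [← Nat.div_add_mod m 4]
  rw [pow_add, pow_mul, Complex.I_pow_four, one_pow, one_mul]

lemma star_exp_mul (θ : ℝ) :
    star (Complex.exp ((θ:ℂ) * Complex.I)) * Complex.exp ((θ:ℂ) * Complex.I) = 1 := by
  rw [Complex.star_def, ← Complex.exp_conj, ← Complex.exp_add]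
  simp [Complex.exp_eq_one_iff]

lemma star_I_pow_mul (m : ℕ) : star (Complex.I ^ m) * Complex.I ^ m = 1 := by
  rw [star_pow, ← mul_pow]
  simp [Complex.star_def, Complex.conj_I]

lemma I_eq_exp : (Complex.I : ℂ) = Complex.exp ((Real.pi/2 : ℝ) * Complex.I) := by
  rw [Complex.exp_mul_I]
  push_cast
  rw [Complex.cos_pi_div_two, Complex.sin_pi_div_two]
  ring

lemma I_pow_eq_exp (m : ℕ) :
    Complex.I ^ m = Complex.exp (((m * (Real.pi/2) : ℝ) : ℂ) * Complex.I) := by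
  rw [show ((m * (Real.pi/2) : ℝ) : ℂ) * Complex.I = m * ((Real.pi/2 :ℝ) * Complex.I) by
    push_cast; ring, Complex.exp_nat_mul, ← I_eq_exp]

/-! ### Pauli group lemmas -/

lemma pauliGroup_unitary {n : ℕ} {B : Matrix (Fin n → Fin 2) (Fin n → Fin 2) ℂ}
    (hB : B ∈ PauliGroup n) : B * Bᴴ = 1 ∧ Bᴴ * B = 1 := by
  obtain ⟨k, x, rfl⟩ := hB
  constructor
  · rw [Matrix.conjTranspose_smul, Matrix.smul_mul, Matrix.mul_smul, smul_smul,
      pauli_herm, pauli_mul_self, mul_comm, star_I_pow_mul, one_smul]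
  · rw [Matrix.conjTranspose_smul, Matrix.smul_mul, Matrix.mul_smul, smul_smul,
      pauli_herm, pauli_mul_self, star_I_pow_mul, one_smul]

lemma pauliGroup_mul_mem {n : ℕ} {B₁ B₂ : Matrix (Fin n → Fin 2) (Fin n → Fin 2) ℂ}
    (h₁ : B₁ ∈ PauliGroup n) (h₂ : B₂ ∈ PauliGroup n) : B₁ * B₂ ∈ PauliGroup n := by
  obtain ⟨k₁, x₁, rfl⟩ := h₁
  obtain ⟨k₂, x₂, rfl⟩ := h₂
  rw [Matrix.smul_mul, Matrix.mul_smul, smul_smul, pauli_mul, smul_smul]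
  set M : ℕ := (k₁ : ℕ) + (k₂ : ℕ) + ∑ j, (ph4 (x₁ j) (x₂ j) : ℕ) with hM
  refine ⟨⟨M % 4, Nat.mod_lt _ (by norm_num)⟩, fun k => mul4 (x₁ k) (x₂ k), ?_⟩
  congr 1
  rw [Finset.prod_pow_eq_pow_sum, ← pow_add, ← pow_add, ← hM, I_pow_mod]

lemma conj_by_unitary {κ : Type*} [Fintype κ] [DecidableEq κ]
    {U P Q : Matrix κ κ ℂ} (hU1 : U * Uᴴ = 1) (hU2 : Uᴴ * U = 1) (hPQ : P * Q = 1) :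
    (U * P * Uᴴ) * (U * Q * Uᴴ) = 1 := by
  have : (U * P * Uᴴ) * (U * Q * Uᴴ) = U * (P * ((Uᴴ * U) * (Q * Uᴴ))) := by
    simp only [Matrix.mul_assoc]
  rw [this, hU2, Matrix.one_mul, ← Matrix.mul_assoc P Q Uᴴ, hPQ, Matrix.one_mul, hU1]

/-- Key estimate: distance to the product is at most the sum of distances. -/
lemma key_estimate {κ : Type*} [Fintype κ] [DecidableEq κ]
    (A₁ A₂ B₁ B₂ : Matrix κ κ ℂ)
    (hA₁ : A₁ᴴ * A₁ = 1) (hB₂ : B₂ * B₂ᴴ = 1) (θ₁ θ₂ : ℝ) :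
    fnorm (Complex.exp (((θ₁ + θ₂ : ℝ) : ℂ) * Complex.I) • (A₁ * A₂) - B₁ * B₂) ≤
      fnorm (Complex.exp ((θ₁ : ℂ) * Complex.I) • A₁ - B₁) +
      fnorm (Complex.exp ((θ₂ : ℂ) * Complex.I) • A₂ - B₂) := by
  set c₁ := Complex.exp ((θ₁:ℂ) * Complex.I) with hc₁
  set c₂ := Complex.exp ((θ₂:ℂ) * Complex.I) with hc₂
  have hc : Complex.exp (((θ₁ + θ₂ : ℝ):ℂ) * Complex.I) = c₁ * c₂ := by
    rw [hc₁, hc₂, ← Complex.exp_add]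
    push_cast
    ring_nf
  have hsplit : (c₁ * c₂) • (A₁ * A₂) - B₁ * B₂ =
      c₁ • (A₁ * (c₂ • A₂ - B₂)) + (c₁ • A₁ - B₁) * B₂ := by
    rw [Matrix.mul_sub, Matrix.sub_mul, Matrix.mul_smul, Matrix.smul_mul, smul_sub, smul_smul]
    abel
  rw [hc, hsplit]
  refine le_trans (fnorm_add_le _ _) ?_
  have e1 : fnorm (c₁ • (A₁ * (c₂ • A₂ - B₂))) = fnorm (c₂ • A₂ - B₂) := by
    rw [fnorm_unit_smul _ (star_exp_mul θ₁), fnorm_unitary_left hA₁]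
  have e2 : fnorm ((c₁ • A₁ - B₁) * B₂) = fnorm (c₁ • A₁ - B₁) := fnorm_unitary_right hB₂ _
  rw [e1, e2]
  exact le_of_eq (add_comm _ _)

/-! ### Combinatorics -/

lemma exists_pair {n : ℕ} (G : Set (Fin n → Fin 4))
    (hG : (2:ℝ)/3 * 4^n ≤ (G.ncard : ℝ)) (y : Fin n → Fin 4) :
    ∃ z ∈ G, ∃ x ∈ G, (fun k => mul4 (z k) (x k)) = y := by
  classical
  set φ : (Fin n → Fin 4) → (Fin n → Fin 4) := fun x k => mul4 (y k) (x k) with hφ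
  have hinv : Function.Involutive φ := fun x => funext fun k => mul4_cancel (y k) (x k)
  have hinj : Function.Injective φ := hinv.injective
  have hcard : (φ '' G).ncard = G.ncard := Set.ncard_image_of_injective G hinj
  have hmeet : (G ∩ (φ '' G)).Nonempty := by
    by_contra hdisj
    rw [Set.not_nonempty_iff_eq_empty] at hdisj
    have hdj : Disjoint G (φ '' G) := Set.disjoint_iff_inter_eq_empty.2 hdisj
    have hun : (G ∪ φ '' G).ncard = G.ncard + (φ '' G).ncard :=
      Set.ncard_union_eq hdj (Set.toFinite _) (Set.toFinite _)
    have hle : (G ∪ φ '' G).ncard ≤ 4 ^ n := by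
      have := Set.ncard_le_ncard (Set.subset_univ (G ∪ φ '' G)) (Set.toFinite _)
      simpa [Set.ncard_univ, Nat.card_eq_fintype_card] using this
    have h4 : (0:ℝ) < 4 ^ n := by positivity
    have : (2:ℝ)/3 * 4^n + (2:ℝ)/3 * 4^n ≤ 4 ^ n := by
      calc (2:ℝ)/3 * 4^n + (2:ℝ)/3 * 4^n ≤ (G.ncard : ℝ) + ((φ '' G).ncard : ℝ) := by
            rw [hcard]; linarith
        _ = ((G.ncard + (φ '' G).ncard : ℕ) : ℝ) := by push_cast; ring
        _ = ((G ∪ φ '' G).ncard : ℝ) := by rw [hun]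
        _ ≤ ((4 ^ n : ℕ) : ℝ) := by exact_mod_cast hle
        _ = 4 ^ n := by push_cast; ring
    linarith
  obtain ⟨z, hzG, x, hxG, hzx⟩ := hmeet
  refine ⟨z, hzG, x, hxG, ?_⟩
  funext k
  have : z k = mul4 (y k) (x k) := by rw [← hzx]
  rw [this, mul4_mul4]

/-- If at least a 2/3 fraction of x ∈ Z₄ⁿ satisfy
D(Uσ_xU†, P_n) ≤ δ, then every y satisfies D(Uσ_yU†, P_n) ≤ 2δ. -/
theorem pauli_conjugate_good_fraction {n : ℕ} {δ : ℝ} (hδ : 0 ≤ δ)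
    (U : Matrix (Fin n → Fin 2) (Fin n → Fin 2) ℂ)
    (hU : U ∈ Matrix.unitaryGroup (Fin n → Fin 2) ℂ)
    (hfrac : (2 : ℝ) / 3 * 4 ^ n ≤
      ({x : Fin n → Fin 4 | uDistSet (U * pauli x * Uᴴ) (PauliGroup n) ≤ δ}.ncard : ℝ)) :
    ∀ y : Fin n → Fin 4, uDistSet (U * pauli y * Uᴴ) (PauliGroup n) ≤ 2 * δ := by
  intro y
  have hU1 : U * Uᴴ = 1 := by
    have := Matrix.mem_unitaryGroup_iff.mp hU
    rwa [Matrix.star_eq_conjTranspose] at this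
  have hU2 : Uᴴ * U = 1 := by
    have := Matrix.mem_unitaryGroup_iff'.mp hU
    rwa [Matrix.star_eq_conjTranspose] at this
  obtain ⟨z, hz, x, hx, hzx⟩ := exists_pair _ hfrac y
  simp only [Set.mem_setOf_eq] at hz hx
  -- the product relation
  have hpm := pauli_mul z x
  rw [show (fun k => mul4 (z k) (x k)) = y from hzx] at hpm
  set m : ℕ := ∑ k, (ph4 (z k) (x k) : ℕ) with hm
  have hc : pauli z * pauli x = Complex.I ^ m • pauli y := by
    rw [hpm]; congr 1; rw [Finset.prod_pow_eq_pow_sum]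
  set φ : ℝ := m * (Real.pi / 2) with hφ
  apply le_of_forall_pos_le_add
  intro ε hε
  have hPne : (PauliGroup n).Nonempty := ⟨pauli y, ⟨0, y, by simp⟩⟩
  obtain ⟨B₁, hB₁, θ₁, h₁⟩ := uDistSet_extract _ hPne (half_pos hε) hz
  obtain ⟨B₂, hB₂, θ₂, h₂⟩ := uDistSet_extract _ hPne (half_pos hε) hx
  set A₁ := U * pauli z * Uᴴ with hA₁def
  set A₂ := U * pauli x * Uᴴ with hA₂def
  -- the scalar rewriting
  have hrw : Complex.exp (((θ₁ + θ₂ + φ : ℝ):ℂ) * Complex.I) • (U * pauli y * Uᴴ) =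
      Complex.exp (((θ₁ + θ₂ : ℝ):ℂ) * Complex.I) • (A₁ * A₂) := by
    have hAA : A₁ * A₂ = Complex.I ^ m • (U * pauli y * Uᴴ) := by
      rw [hA₁def, hA₂def]
      have : (U * pauli z * Uᴴ) * (U * pauli x * Uᴴ) =
          U * ((pauli z * pauli x) * Uᴴ) := by
        have h' : (U * pauli z * Uᴴ) * (U * pauli x * Uᴴ) =
            U * (pauli z * ((Uᴴ * U) * (pauli x * Uᴴ))) := by
          simp only [Matrix.mul_assoc]
        rw [h', hU2, Matrix.one_mul, ← Matrix.mul_assoc (pauli z) (pauli x) Uᴴ]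
      rw [this, hc, Matrix.smul_mul, Matrix.mul_smul, ← Matrix.mul_assoc]
    rw [hAA, smul_smul]
    congr 1
    rw [I_pow_eq_exp, ← Complex.exp_add]
    congr 1
    rw [hφ]
    push_cast
    ring
  have hA₁unit : A₁ᴴ * A₁ = 1 := by
    have hA₁herm : A₁ᴴ = A₁ := by
      rw [hA₁def, Matrix.conjTranspose_mul, Matrix.conjTranspose_mul,
        Matrix.conjTranspose_conjTranspose, pauli_herm, Matrix.mul_assoc]
    rw [hA₁herm, hA₁def]
    exact conj_by_unitary hU1 hU2 (pauli_mul_self z)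
  have hB₂unit : B₂ * B₂ᴴ = 1 := (pauliGroup_unitary hB₂).1
  have hchain :
      uDistSet (U * pauli y * Uᴴ) (PauliGroup n) ≤
        (Real.sqrt (2 * Fintype.card (Fin n → Fin 2)))⁻¹ *
          fnorm (Complex.exp (((θ₁ + θ₂ + φ : ℝ):ℂ) * Complex.I) • (U * pauli y * Uᴴ) -
            B₁ * B₂) := by
    refine le_trans (uDistSet_le _ _ (pauliGroup_mul_mem hB₁ hB₂)) ?_
    exact_mod_cast uDist_le (U * pauli y * Uᴴ) (B₁ * B₂) (θ₁ + θ₂ + φ)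
  rw [hrw] at hchain
  refine le_trans hchain ?_
  have hinv : (0:ℝ) ≤ (Real.sqrt (2 * Fintype.card (Fin n → Fin 2)))⁻¹ :=
    inv_nonneg.2 (Real.sqrt_nonneg _)
  calc (Real.sqrt (2 * Fintype.card (Fin n → Fin 2)))⁻¹ *
        fnorm (Complex.exp (((θ₁ + θ₂ : ℝ):ℂ) * Complex.I) • (A₁ * A₂) - B₁ * B₂)
      ≤ (Real.sqrt (2 * Fintype.card (Fin n → Fin 2)))⁻¹ *
        (fnorm (Complex.exp ((θ₁:ℂ) * Complex.I) • A₁ - B₁) +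
         fnorm (Complex.exp ((θ₂:ℂ) * Complex.I) • A₂ - B₂)) := by
        exact mul_le_mul_of_nonneg_left (key_estimate A₁ A₂ B₁ B₂ hA₁unit hB₂unit θ₁ θ₂) hinv
    _ = (Real.sqrt (2 * Fintype.card (Fin n → Fin 2)))⁻¹ *
          fnorm (Complex.exp ((θ₁:ℂ) * Complex.I) • A₁ - B₁) +
        (Real.sqrt (2 * Fintype.card (Fin n → Fin 2)))⁻¹ *
          fnorm (Complex.exp ((θ₂:ℂ) * Complex.I) • A₂ - B₂) := mul_add _ _ _
    _ ≤ (δ + ε/2) + (δ + ε/2) := by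
        exact add_le_add (le_of_lt h₁) (le_of_lt h₂)
    _ = 2 * δ + ε := by ring
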